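/- Let R be a finite group and let R_L ≤ Sym(R) be the left regular representation of R, i.e. the group of left translations {x ↦ rx : r ∈ R}. If for every π ∈ Sym(R) the subgroups R_L and π⁻¹R_Lπ are conjugate in the 2-closure ⟨R_L, π⁻¹R_Lπ⟩^{(2)}, then R is a DCI-group. -/

import Mathlib

/-- The left regular representation of a group `R` inside `Sym(R)`: all left translations. -/
def leftReg (R : Type*) [Group R] : Subgroup (Equiv.Perm R) where
  carrier := {σ : Equiv.Perm R | ∃ r : R, ∀ x, σ x = r * x}
  one_mem' := ⟨1, fun x => by simp⟩
  mul_mem' := by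
    rintro a b ⟨r, hr⟩ ⟨s, hs⟩
    refine ⟨r * s, fun x => ?_⟩
    simp [Equiv.Perm.mul_apply, hr, hs, mul_assoc]
  inv_mem' := by
    rintro a ⟨r, hr⟩
    refine ⟨r⁻¹, fun x => ?_⟩
    have h := hr (a⁻¹ x)
    rw [show a (a⁻¹ x) = x from a.apply_symm_apply x] at h
    have h2 : r⁻¹ * x = a⁻¹ x := by
      conv_lhs => rw [h]
      rw [inv_mul_cancel_left]
    exact h2.symm

/-- The conjugate subgroup `π⁻¹ R_L π` of the left regular representation. -/
def leftRegConj (R : Type*) [Group R] (π : Equiv.Perm R) : Subgroup (Equiv.Perm R) where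
  carrier := {σ : Equiv.Perm R | ∃ ρ ∈ leftReg R, σ = π⁻¹ * ρ * π}
  one_mem' := ⟨1, one_mem _, by group⟩
  mul_mem' := by
    rintro a b ⟨r, hr, rfl⟩ ⟨s, hs, rfl⟩
    exact ⟨r * s, mul_mem hr hs, by group⟩
  inv_mem' := by
    rintro a ⟨r, hr, rfl⟩
    exact ⟨r⁻¹, inv_mem hr, by group⟩

/-- `σ` belongs to the 2-closure `G^{(2)}` of `G`. -/
def twoClosed {α : Type*} (G : Subgroup (Equiv.Perm α)) (σ : Equiv.Perm α) : Prop :=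
  ∀ x y : α, ∃ g ∈ G, σ x = g x ∧ σ y = g y

/-- **Lemma 2.2.** If for every `π ∈ Sym(R)` the subgroups `R_L` and `π⁻¹ R_L π` are
conjugate in the 2-closure `⟨R_L, π⁻¹ R_L π⟩^{(2)}`, then `R` is a DCI-group. -/
theorem stmt_2 (R : Type*) [Group R] [Fintype R]
    (h : ∀ π : Equiv.Perm R, ∃ ψ : Equiv.Perm R,
      twoClosed (leftReg R ⊔ leftRegConj R π) ψ ∧
      (∀ g : Equiv.Perm R, g ∈ leftReg R ↔ ψ * g * ψ⁻¹ ∈ leftRegConj R π)) :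
    ∀ S T : Set R,
      (∃ f : Equiv.Perm R, ∀ x y : R, x⁻¹ * y ∈ S ↔ (f x)⁻¹ * f y ∈ T) →
      ∃ φ : R ≃* R, ⇑φ '' S = T := by
  rintro S T ⟨f, hf⟩
  obtain ⟨ψ, hψ2, hψc⟩ := h f
  -- the subgroup of permutations preserving the `S`-relation
  set P : Subgroup (Equiv.Perm R) :=
    { carrier := {σ : Equiv.Perm R | ∀ x y : R, x⁻¹ * y ∈ S ↔ (σ x)⁻¹ * σ y ∈ S}
      one_mem' := fun x y => by simp
      mul_mem' := by
        intro a b ha hb x y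
        have := (hb x y).trans (ha (b x) (b y))
        simpa [Equiv.Perm.mul_apply] using this
      inv_mem' := by
        intro a ha x y
        have := ha (a⁻¹ x) (a⁻¹ y)
        simp only [Equiv.Perm.inv_def, Equiv.apply_symm_apply] at this
        exact this.symm } with hPdef
  have hl : leftReg R ≤ P := by
    rintro σ ⟨r, hr⟩
    intro x y
    rw [hr, hr]
    have : (r * x)⁻¹ * (r * y) = x⁻¹ * y := by group
    rw [this]
  have hrc : leftRegConj R f ≤ P := by
    rintro σ ⟨ρ, ⟨r, hrρ⟩, rfl⟩
    intro x y
    have key : ∀ z : R, f ((f⁻¹ * ρ * f) z) = r * f z := by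
      intro z
      simp [Equiv.Perm.mul_apply, hrρ]
    rw [hf x y, hf ((f⁻¹ * ρ * f) x) ((f⁻¹ * ρ * f) y), key, key]
    have : (r * f x)⁻¹ * (r * f y) = (f x)⁻¹ * f y := by group
    rw [this]
  have hsup : leftReg R ⊔ leftRegConj R f ≤ P := sup_le hl hrc
  -- ψ preserves the S-relation
  have ψP : ∀ x y : R, x⁻¹ * y ∈ S ↔ (ψ x)⁻¹ * ψ y ∈ S := by
    intro x y
    obtain ⟨g0, hg0, hx, hy⟩ := hψ2 x y
    rw [hx, hy]
    exact hsup hg0 x y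
  set g : Equiv.Perm R := f * ψ with hgdef
  set c : R := g 1 with hcdef
  have hmul : ∀ r x : R, g (r * x) = g r * c⁻¹ * g x := by
    intro r x
    have hm : Equiv.mulLeft r ∈ leftReg R := ⟨r, fun z => rfl⟩
    obtain ⟨ρ, ⟨s, hs⟩, heq⟩ := (hψc (Equiv.mulLeft r)).1 hm
    have h1 : ∀ z : R, g (r * z) = s * g z := by
      intro z
      have := congrArg (fun σ : Equiv.Perm R => σ (ψ z)) heq
      simp only [Equiv.Perm.mul_apply, Equiv.Perm.inv_def, Equiv.symm_apply_apply] at this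
      have h2 : ψ (Equiv.mulLeft r z) = f⁻¹ (ρ (f (ψ z))) := this
      have h3 : f (ψ (r * z)) = ρ (f (ψ z)) := by
        have := congrArg f h2
        simpa [Equiv.Perm.inv_def, Equiv.apply_symm_apply] using this
      calc g (r * z) = f (ψ (r * z)) := rfl
        _ = ρ (f (ψ z)) := h3
        _ = s * g z := by rw [hs]; rfl
    have h10 : g r = s * c := by simpa using h1 1
    have hsval : s = g r * c⁻¹ := by
      rw [h10]; group
    rw [h1 x, hsval]
  set e : R ≃ R := (g : Equiv.Perm R).trans (Equiv.mulLeft c⁻¹) with hedef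
  have heapp : ∀ x : R, e x = c⁻¹ * g x := fun x => rfl
  have emul : ∀ x y : R, e (x * y) = e x * e y := by
    intro x y
    rw [heapp, heapp, heapp, hmul x y]
    group
  set φ : R ≃* R := { e with map_mul' := emul } with hφdef
  have hφapp : ∀ x : R, φ x = c⁻¹ * g x := fun x => rfl
  have claim : ∀ s : R, s ∈ S ↔ φ s ∈ T := by
    intro s
    have h1 : s ∈ S ↔ (ψ 1)⁻¹ * ψ s ∈ S := by
      simpa using ψP 1 s
    have h2 : (ψ 1)⁻¹ * ψ s ∈ S ↔ (f (ψ 1))⁻¹ * f (ψ s) ∈ T := hf (ψ 1) (ψ s)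
    have h3 : φ s = (f (ψ 1))⁻¹ * f (ψ s) := by
      rw [hφapp]
      rfl
    rw [h1, h2, ← h3]
  refine ⟨φ, ?_⟩
  ext t
  constructor
  · rintro ⟨s, hs, rfl⟩
    exact (claim s).1 hs
  · intro ht
    refine ⟨φ.symm t, ?_, by simp⟩
    have := (claim (φ.symm t)).2
    simp only [MulEquiv.apply_symm_apply] at this
    exact this ht
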